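/- Let P ⊆ ℝ^D be a full-dimensional pointed polyhedron that is the intersection of n closed halfspaces in general position. Let ℓ be a linear functional that attains its minimum over P and takes distinct values at distinct vertices of P, let B ∈ ℝ be strictly greater than the minimum value of ℓ on P, suppose every face of P on which ℓ < B holds pointwise is bounded, and suppose d = dim P^{ℓ<B} < D. Then the total number of nonempty faces f of P with ℓ < B pointwise on f is at most 2^d · C(n,d), where C(·,·) denotes the binomial coefficient. -/

import Mathlib

open Set Classical

/-- `f` is an (exposed) face of `P`: the empty set, `P` itself, or the set of maximizers
of a linear functional over `P`. -/
def IsFace {V : Type*} [AddCommGroup V] [Module ℝ V] (P f : Set V) : Prop :=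
  f = ∅ ∨ f = P ∨ ∃ l : V →ₗ[ℝ] ℝ, f = {x ∈ P | ∀ y ∈ P, l y ≤ l x}

/-- `v` is a vertex of `P`: the singleton `{v}` is a face of `P`. -/
def IsVertex {V : Type*} [AddCommGroup V] [Module ℝ V] (P : Set V) (v : V) : Prop :=
  IsFace P {v}

/-- Dimension of a face: `-1` for the empty face, otherwise the dimension of its
affine hull. -/
noncomputable def faceDim {V : Type*} [AddCommGroup V] [Module ℝ V] (f : Set V) : ℤ :=
  if f = ∅ then -1 else (Module.finrank ℝ (affineSpan ℝ f).direction : ℤ)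

namespace GPF

noncomputable section

variable {D n : ℕ}

/-- The linear functional `x ↦ ∑ j, c j * x j`. -/
def lin (c : Fin D → ℝ) : (Fin D → ℝ) →ₗ[ℝ] ℝ where
  toFun x := ∑ j, c j * x j
  map_add' x y := by
    simp [mul_add, Finset.sum_add_distrib]
  map_smul' r x := by
    simp only [smul_eq_mul, RingHom.id_apply, Finset.mul_sum]
    exact Finset.sum_congr rfl fun j _ => by simp [smul_eq_mul]; ring

@[simp] lemma lin_apply (c x : Fin D → ℝ) : lin c x = ∑ j, c j * x j := rfl

lemma lin_comm (c x : Fin D → ℝ) : lin c x = lin x c := by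
  simp [mul_comm]

lemma lin_cont (c : Fin D → ℝ) : Continuous (lin c) :=
  (lin c).continuous_of_finiteDimensional

variable {a : Fin n → Fin D → ℝ} {b : Fin n → ℝ} {P : Set (Fin D → ℝ)}

/-- tightness set of a point -/
def Tpt (a : Fin n → Fin D → ℝ) (b : Fin n → ℝ) (w : Fin D → ℝ) : Finset (Fin n) :=
  Finset.univ.filter (fun i => lin (a i) w = b i)

lemma mem_Tpt {w : Fin D → ℝ} {i : Fin n} : i ∈ Tpt a b w ↔ lin (a i) w = b i := by
  simp only [Tpt, Finset.mem_filter, Finset.mem_univ, true_and]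

/-- tightness set of a set -/
def TF (a : Fin n → Fin D → ℝ) (b : Fin n → ℝ) (f : Set (Fin D → ℝ)) : Finset (Fin n) :=
  Finset.univ.filter (fun i => ∀ x ∈ f, lin (a i) x = b i)

lemma mem_TF {f : Set (Fin D → ℝ)} {i : Fin n} :
    i ∈ TF a b f ↔ ∀ x ∈ f, lin (a i) x = b i := by
  simp only [TF, Finset.mem_filter, Finset.mem_univ, true_and]

/-- the subset of `P` where constraints in `S` are tight -/
def FF (a : Fin n → Fin D → ℝ) (b : Fin n → ℝ) (P : Set (Fin D → ℝ))
    (S : Finset (Fin n)) : Set (Fin D → ℝ) :=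
  {x ∈ P | ∀ i ∈ S, lin (a i) x = b i}

lemma mem_FF {S : Finset (Fin n)} {x : Fin D → ℝ} :
    x ∈ FF a b P S ↔ x ∈ P ∧ ∀ i ∈ S, lin (a i) x = b i := Iff.rfl

lemma FF_subset (S : Finset (Fin n)) : FF a b P S ⊆ P := fun _ h => h.1

lemma FF_mono {S S' : Finset (Fin n)} (h : S ⊆ S') : FF a b P S' ⊆ FF a b P S :=
  fun x hx => ⟨hx.1, fun i hi => hx.2 i (h hi)⟩

lemma TF_subset_Tpt {f : Set (Fin D → ℝ)} {w : Fin D → ℝ} (hw : w ∈ f) :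
    TF a b f ⊆ Tpt a b w := by
  intro i hi
  exact mem_Tpt.2 (mem_TF.1 hi w hw)

section basic

variable (hmem : ∀ x, x ∈ P ↔ ∀ i, lin (a i) x ≤ b i)

lemma memP_of_hP (hP : P = ⋂ i, {x | ∑ j, a i j * x j ≤ b i}) :
    ∀ x, x ∈ P ↔ ∀ i, lin (a i) x ≤ b i := by
  intro x; subst hP; simp [Set.mem_iInter, lin_apply]

include hmem

lemma Pclosed : IsClosed P := by
  have : P = ⋂ i, (lin (a i)) ⁻¹' (Set.Iic (b i)) := by
    ext x; simp [hmem x]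
  rw [this]
  exact isClosed_iInter fun i => IsClosed.preimage (lin_cont _) isClosed_Iic

lemma Pconvex : Convex ℝ P := by
  have : P = ⋂ i, {x | lin (a i) x ≤ b i} := by
    ext x; simp [hmem x]
  rw [this]
  exact convex_iInter fun i => convex_halfSpace_le (lin (a i)).isLinear _

lemma slack_lt {x : Fin D → ℝ} (hx : x ∈ P) {i : Fin n} (hi : i ∉ Tpt a b x) :
    lin (a i) x < b i :=
  lt_of_le_of_ne ((hmem x).1 hx i) (by simpa [mem_Tpt] using hi)

end basic

lemma face_subset {f : Set (Fin D → ℝ)} (hf : IsFace P f) : f ⊆ P := by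
  rcases hf with rfl | rfl | ⟨l₀, rfl⟩
  · exact Set.empty_subset _
  · exact subset_rfl
  · exact fun x hx => hx.1

lemma face_convex (hconv : Convex ℝ P) {f : Set (Fin D → ℝ)} (hf : IsFace P f) :
    Convex ℝ f := by
  rcases hf with rfl | rfl | ⟨l₀, rfl⟩
  · exact convex_empty
  · exact hconv
  · intro x hx y hy s t hs ht hst
    refine ⟨hconv hx.1 hy.1 hs ht hst, fun z hz => ?_⟩
    have h1 := hx.2 z hz
    have h2 := hy.2 z hz
    have : l₀ (s • x + t • y) = s * l₀ x + t * l₀ y := by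
      simp [map_add, map_smul]
    rw [this]
    calc l₀ z = s * l₀ z + t * l₀ z := by rw [← add_mul, hst, one_mul]
    _ ≤ s * l₀ x + t * l₀ y :=
        add_le_add (mul_le_mul_of_nonneg_left h1 hs) (mul_le_mul_of_nonneg_left h2 ht)

lemma face_closed (hcl : IsClosed P) {f : Set (Fin D → ℝ)} (hf : IsFace P f) :
    IsClosed f := by
  rcases hf with rfl | rfl | ⟨l₀, rfl⟩
  · exact isClosed_empty
  · exact hcl
  · have : {x ∈ P | ∀ y ∈ P, l₀ y ≤ l₀ x} = P ∩ ⋂ (y : P), {x | l₀ y ≤ l₀ x} := by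
      ext x
      constructor
      · rintro ⟨h1, h2⟩; exact ⟨h1, Set.mem_iInter.2 fun y => h2 y.1 y.2⟩
      · rintro ⟨h1, h2⟩; exact ⟨h1, fun y hy => Set.mem_iInter.1 h2 ⟨y, hy⟩⟩
    rw [this]
    exact hcl.inter (isClosed_iInter fun y =>
      IsClosed.preimage (l₀.continuous_of_finiteDimensional) isClosed_Ici)

section main

variable (hmem : ∀ x, x ∈ P ↔ ∀ i, lin (a i) x ≤ b i)

/-- perturbation lemma: strict constraints stay strict in a neighborhood -/
lemma perturb (y u : Fin D → ℝ) (s : Finset (Fin n))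
    (h : ∀ i ∈ s, lin (a i) y < b i) :
    ∃ ε > 0, ∀ t : ℝ, |t| ≤ ε → ∀ i ∈ s, lin (a i) (y + t • u) < b i := by
  classical
  rcases s.eq_empty_or_nonempty with rfl | hne
  · exact ⟨1, one_pos, fun t _ i hi => absurd hi (by simp)⟩
  set g : Fin n → ℝ := fun i => (b i - lin (a i) y) / (2 * max |lin (a i) u| 1) with hg
  have hgpos : ∀ i ∈ s, 0 < g i := fun i hi => div_pos (by linarith [h i hi]) (by positivity)
  refine ⟨s.inf' hne g, by exact (Finset.lt_inf'_iff hne).2 hgpos, fun t ht i hi => ?_⟩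
  have hεg : s.inf' hne g ≤ g i := Finset.inf'_le _ hi
  have hm : (1:ℝ) ≤ max |lin (a i) u| 1 := le_max_right _ _
  have hm0 : (0:ℝ) < max |lin (a i) u| 1 := lt_of_lt_of_le one_pos hm
  have key : t * lin (a i) u ≤ g i * max |lin (a i) u| 1 := by
    calc t * lin (a i) u ≤ |t * lin (a i) u| := le_abs_self _
    _ = |t| * |lin (a i) u| := abs_mul _ _
    _ ≤ g i * max |lin (a i) u| 1 :=
        mul_le_mul (le_trans ht hεg) (le_max_left _ _) (abs_nonneg _) (le_of_lt (hgpos i hi))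
  have hgi : g i * max |lin (a i) u| 1 = (b i - lin (a i) y) / 2 := by
    rw [hg]
    field_simp
  rw [hgi] at key
  have hlt := h i hi
  have : lin (a i) (y + t • u) = lin (a i) y + t * lin (a i) u := by
    rw [map_add, map_smul]; simp
  rw [this]
  linarith

include hmem

/-- every point of `P` has its non-tight constraints strictly slack;
    moving from a point along a direction that is non-positive on the tight set stays in `P`. -/
lemma move {w : Fin D → ℝ} (hw : w ∈ P) (u : Fin D → ℝ)
    (hu : ∀ i ∈ Tpt a b w, lin (a i) u ≤ 0) :
    ∃ δ > 0, ∀ t : ℝ, 0 ≤ t → t ≤ δ →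
      (w + t • u ∈ P ∧ ∀ i ∉ Tpt a b w, lin (a i) (w + t • u) < b i) := by
  classical
  obtain ⟨ε, hε, hslack⟩ := perturb (a := a) (b := b) w u
    (Finset.univ.filter (fun i => i ∉ Tpt a b w))
    (by intro i hi
        simp only [Finset.mem_filter, Finset.mem_univ, true_and] at hi
        exact slack_lt hmem hw hi)
  refine ⟨ε, hε, fun t ht0 htε => ?_⟩
  have habs : |t| ≤ ε := by rwa [abs_of_nonneg ht0]
  have hsl : ∀ i ∉ Tpt a b w, lin (a i) (w + t • u) < b i := by
    intro i hi
    exact hslack t habs i (by simp [hi])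
  refine ⟨(hmem _).2 fun i => ?_, hsl⟩
  by_cases hi : i ∈ Tpt a b w
  · have : lin (a i) (w + t • u) = b i + t * lin (a i) u := by
      rw [map_add, map_smul, mem_Tpt.1 hi]; simp
    rw [this]
    nlinarith [hu i hi]
  · exact le_of_lt (hsl i hi)
/-- a nonempty face has a point at which all non-tight constraints are strictly slack -/
lemma exists_slack {f : Set (Fin D → ℝ)} (hconv : Convex ℝ f) (hne : f.Nonempty)
    (hsub : f ⊆ P) :
    ∃ x₀ ∈ f, ∀ i ∉ TF a b f, lin (a i) x₀ < b i := by
  classical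
  set s : Finset (Fin n) := Finset.univ.filter (fun i => i ∉ TF a b f) with hs
  have hy : ∀ i ∈ s, ∃ y ∈ f, lin (a i) y < b i := by
    intro i hi
    simp only [hs, Finset.mem_filter, Finset.mem_univ, true_and, mem_TF] at hi
    push_neg at hi
    obtain ⟨y, hyf, hyne⟩ := hi
    exact ⟨y, hyf, lt_of_le_of_ne ((hmem y).1 (hsub hyf) i) hyne⟩
  choose y hyf hylt using hy
  rcases s.eq_empty_or_nonempty with hse | hsne
  · obtain ⟨x, hx⟩ := hne
    refine ⟨x, hx, fun i hi => absurd (?_ : i ∈ s) (by rw [hse]; exact Finset.notMem_empty i)⟩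
    simp [hs, hi]
  · set k := s.card with hk
    have hkpos : 0 < (k:ℝ) := by
      have := Finset.card_pos.2 hsne
      exact_mod_cast this
    set x₀ : Fin D → ℝ := ∑ i ∈ s.attach, ((k:ℝ)⁻¹) • y i.1 i.2 with hx₀
    have hx₀f : x₀ ∈ f := by
      apply hconv.sum_mem (fun i _ => by positivity)
      · rw [Finset.sum_const, Finset.card_attach, ← hk, nsmul_eq_mul]
        field_simp
      · exact fun i _ => hyf i.1 i.2
    refine ⟨x₀, hx₀f, fun i hi => ?_⟩
    have his : i ∈ s := by simp [hs, hi]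
    have hcalc : lin (a i) x₀ = ∑ j ∈ s.attach, (k:ℝ)⁻¹ * lin (a i) (y j.1 j.2) := by
      rw [hx₀, map_sum]
      exact Finset.sum_congr rfl fun j _ => by rw [map_smul]; simp
    rw [hcalc]
    have hlt : ∑ j ∈ s.attach, (k:ℝ)⁻¹ * lin (a i) (y j.1 j.2)
        < ∑ j ∈ s.attach, (k:ℝ)⁻¹ * b i := by
      apply Finset.sum_lt_sum
      · intro j _
        have := (hmem _).1 (hsub (hyf j.1 j.2)) i
        have h0 : (0:ℝ) ≤ (k:ℝ)⁻¹ := by positivity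
        exact mul_le_mul_of_nonneg_left this h0
      · refine ⟨⟨i, his⟩, Finset.mem_attach _ _, ?_⟩
        have h0 : (0:ℝ) < (k:ℝ)⁻¹ := by positivity
        exact mul_lt_mul_of_pos_left (hylt i his) h0
    have : ∑ _j ∈ s.attach, (k:ℝ)⁻¹ * b i = b i := by
      rw [Finset.sum_const, Finset.card_attach, ← hk, nsmul_eq_mul]
      field_simp
    linarith [hlt, this ▸ hlt]

/-- Every nonempty face equals the set cut out by its tight constraints. -/
lemma face_eq_FF {f : Set (Fin D → ℝ)} (hconv : Convex ℝ P) (hf : IsFace P f)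
    (hne : f.Nonempty) : f = FF a b P (TF a b f) := by
  classical
  obtain ⟨x₀, hx₀f, hx₀s⟩ := exists_slack hmem (face_convex hconv hf) hne (face_subset hf)
  have hsub := face_subset hf
  apply Set.Subset.antisymm
  · exact fun x hx => ⟨hsub hx, fun i hi => mem_TF.1 hi x hx⟩
  rcases hf with rfl | rfl | ⟨l₀, rfl⟩
  · exact absurd hne (by simp)
  · exact fun x hx => hx.1
  · intro z hz
    -- z ∈ FF; want z ∈ f
    set sbad : Finset (Fin n) := Finset.univ.filter (fun i => i ∉ TF a b {x ∈ P | ∀ y ∈ P, l₀ y ≤ l₀ x}) with hsbad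
    obtain ⟨ε, hε, hpert⟩ := perturb (a := a) (b := b) x₀ (x₀ - z) sbad
      (by intro i hi
          simp only [hsbad, Finset.mem_filter, Finset.mem_univ, true_and] at hi
          exact hx₀s i hi)
    have hw : x₀ + ε • (x₀ - z) ∈ P := by
      apply (hmem _).2
      intro i
      by_cases hi : i ∈ TF a b {x ∈ P | ∀ y ∈ P, l₀ y ≤ l₀ x}
      · have h1 : lin (a i) x₀ = b i := mem_TF.1 hi x₀ hx₀f
        have h2 : lin (a i) z = b i := hz.2 i hi
        have : lin (a i) (x₀ + ε • (x₀ - z)) = b i + ε * (b i - b i) := by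
          rw [map_add, map_smul, map_sub, h1, h2]; simp
        rw [this]; simp
      · have := hpert ε (by rw [abs_of_pos hε]) i (by simp [hsbad, hi])
        exact le_of_lt this
    have hle := hx₀f.2 _ hw
    have hexp : l₀ (x₀ + ε • (x₀ - z)) = l₀ x₀ + ε * (l₀ x₀ - l₀ z) := by
      rw [map_add, map_smul, map_sub]; simp
    rw [hexp] at hle
    have hzge : l₀ x₀ ≤ l₀ z := by nlinarith
    exact ⟨hz.1, fun y hy => le_trans (hx₀f.2 y hy) hzge⟩

/-- `FF S` is a face whenever it is nonempty. -/
lemma FF_isFace {S : Finset (Fin n)} (hne : (FF a b P S).Nonempty) :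
    IsFace P (FF a b P S) := by
  classical
  refine Or.inr (Or.inr ⟨∑ i ∈ S, lin (a i), ?_⟩)
  obtain ⟨x₀, hx₀⟩ := hne
  have hsum : ∀ x, (∑ i ∈ S, lin (a i)) x = ∑ i ∈ S, lin (a i) x := by
    intro x; simp [LinearMap.coe_sum]
  have hub : ∀ y ∈ P, (∑ i ∈ S, lin (a i)) y ≤ ∑ i ∈ S, b i := by
    intro y hy
    rw [hsum]
    exact Finset.sum_le_sum fun i _ => (hmem y).1 hy i
  have hx₀val : (∑ i ∈ S, lin (a i)) x₀ = ∑ i ∈ S, b i := by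
    rw [hsum]
    exact Finset.sum_congr rfl fun i hi => hx₀.2 i hi
  ext x
  constructor
  · intro hx
    have hxval : (∑ i ∈ S, lin (a i)) x = ∑ i ∈ S, b i := by
      rw [hsum]
      exact Finset.sum_congr rfl fun i hi => hx.2 i hi
    exact ⟨hx.1, fun y hy => by rw [hxval]; exact hub y hy⟩
  · rintro ⟨hxP, hxmax⟩
    refine ⟨hxP, fun i hi => ?_⟩
    by_contra hne'
    have hlt : lin (a i) x < b i := lt_of_le_of_ne ((hmem x).1 hxP i) hne'
    have hstrict : (∑ j ∈ S, lin (a j)) x < ∑ j ∈ S, b j := by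
      rw [hsum]
      exact Finset.sum_lt_sum (fun j _ => (hmem x).1 hxP j) ⟨i, hi, hlt⟩
    have := hxmax x₀ hx₀.1
    rw [hx₀val] at this
    linarith

/-- A nonempty compact face contains a vertex of `P` maximizing any given linear functional. -/
lemma compact_face_vertex {f : Set (Fin D → ℝ)} (hconv : Convex ℝ P)
    (hf : IsFace P f) (hne : f.Nonempty) (hcl : IsClosed f) (hbd : Bornology.IsBounded f)
    (g : (Fin D → ℝ) →ₗ[ℝ] ℝ) :
    ∃ w ∈ f, IsVertex P w ∧ ∀ x ∈ f, g x ≤ g w := by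
  classical
  have hcpt : IsCompact f := Metric.isCompact_of_isClosed_isBounded hcl hbd
  obtain ⟨w₀, hw₀f, hw₀max⟩ := hcpt.exists_isMaxOn hne
    (g.continuous_of_finiteDimensional.continuousOn)
  set f' : Set (Fin D → ℝ) := {x ∈ f | ∀ y ∈ f, g y ≤ g x} with hf'def
  have hw₀f' : w₀ ∈ f' := ⟨hw₀f, fun y hy => hw₀max hy⟩
  set S : Set ℕ := {m | ∃ w ∈ f', (Tpt a b w).card = m} with hSdef
  have hSne : S.Nonempty := ⟨_, w₀, hw₀f', rfl⟩
  have hSbdd : BddAbove S := by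
    refine ⟨n, ?_⟩
    rintro m ⟨w, _, rfl⟩
    simpa using Finset.card_le_card (Finset.subset_univ (Tpt a b w))
  obtain ⟨w, hwf', hwcard⟩ := Nat.sSup_mem hSne hSbdd
  have hwf : w ∈ f := hwf'.1
  have hwP : w ∈ P := face_subset hf hwf
  have hfeq := face_eq_FF hmem hconv hf hne
  have hmemf : ∀ z, z ∈ P → (∀ i ∈ TF a b f, lin (a i) z = b i) → z ∈ f := by
    intro z h1 h2; rw [hfeq]; exact ⟨h1, h2⟩
  have hTsub : TF a b f ⊆ Tpt a b w := TF_subset_Tpt hwf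
  have hFF : FF a b P (Tpt a b w) = {w} := by
    have hwFF : w ∈ FF a b P (Tpt a b w) := ⟨hwP, fun i hi => mem_Tpt.1 hi⟩
    refine Set.eq_singleton_iff_unique_mem.2 ⟨hwFF, fun x hx => ?_⟩
    by_contra hxw
    set u : Fin D → ℝ := x - w with hu
    have hu_ne : u ≠ 0 := sub_ne_zero.2 hxw
    have hu0 : ∀ i ∈ Tpt a b w, lin (a i) u = 0 := by
      intro i hi
      rw [hu, map_sub, hx.2 i hi, mem_Tpt.1 hi, sub_self]
    obtain ⟨ε, hε, hpert⟩ := perturb (a := a) (b := b) w u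
      (Finset.univ.filter (fun i => i ∉ Tpt a b w))
      (by intro i hi
          simp only [Finset.mem_filter, Finset.mem_univ, true_and] at hi
          exact slack_lt hmem hwP hi)
    have htight : ∀ (t : ℝ) (i : Fin n), i ∈ Tpt a b w → lin (a i) (w + t • u) = b i := by
      intro t i hi
      rw [map_add, map_smul, mem_Tpt.1 hi, hu0 i hi]
      simp
    have hmove : ∀ t : ℝ, |t| ≤ ε → w + t • u ∈ f := by
      intro t ht
      apply hmemf
      · apply (hmem _).2
        intro i
        by_cases hi : i ∈ Tpt a b w
        · exact le_of_eq (htight t i hi)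
        · exact le_of_lt (hpert t ht i (by simp [hi]))
      · intro i hi
        exact htight t i (hTsub hi)
    have hgu : g u = 0 := by
      have h1 := hwf'.2 _ (hmove ε (by rw [abs_of_pos hε]))
      have h2 := hwf'.2 _ (hmove (-ε) (by rw [abs_neg, abs_of_pos hε]))
      rw [map_add, map_smul] at h1 h2
      simp only [smul_eq_mul] at h1 h2
      nlinarith
    set T : Set ℝ := {t | 0 ≤ t ∧ w + t • u ∈ P} with hTdef
    have hmemfT : ∀ t ∈ T, w + t • u ∈ f := by
      intro t ht
      exact hmemf _ ht.2 (fun i hi => htight t i (hTsub hi))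
    have hTne : T.Nonempty := ⟨0, le_refl 0, by simpa using hwP⟩
    obtain ⟨R, hR⟩ := hbd.exists_norm_le
    have hunorm : (0:ℝ) < ‖u‖ := norm_pos_iff.2 hu_ne
    have hTbdd : BddAbove T := by
      refine ⟨(R + ‖w‖) / ‖u‖, fun t ht => ?_⟩
      have h1 : ‖w + t • u‖ ≤ R := hR _ (hmemfT t ht)
      have h2 : ‖t • u‖ ≤ R + ‖w‖ := by
        have : t • u = (w + t • u) - w := by abel
        rw [this]
        calc ‖(w + t • u) - w‖ ≤ ‖w + t • u‖ + ‖w‖ := norm_sub_le _ _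
        _ ≤ R + ‖w‖ := by linarith
      rw [norm_smul, Real.norm_eq_abs, abs_of_nonneg ht.1] at h2
      rw [le_div_iff₀ hunorm]
      exact h2
    have hTcl : IsClosed T := by
      have : T = (Set.Ici (0:ℝ)) ∩ (fun t : ℝ => w + t • u) ⁻¹' P := by
        ext t; simp [hTdef, Set.mem_Ici]
      rw [this]
      refine isClosed_Ici.inter (IsClosed.preimage ?_ (Pclosed hmem))
      exact continuous_const.add (continuous_id.smul continuous_const)
    have htstar := IsClosed.csSup_mem hTcl hTne hTbdd
    set t₀ : ℝ := sSup T with ht₀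
    have hw'P : w + t₀ • u ∈ P := htstar.2
    have hw'f : w + t₀ • u ∈ f := hmemfT t₀ htstar
    have hw'f' : w + t₀ • u ∈ f' := by
      refine ⟨hw'f, fun y hy => ?_⟩
      have : g (w + t₀ • u) = g w := by
        rw [map_add, map_smul, hgu]; simp
      rw [this]
      exact hwf'.2 y hy
    have hTsub' : Tpt a b w ⊆ Tpt a b (w + t₀ • u) := by
      intro i hi
      exact mem_Tpt.2 (htight t₀ i hi)
    have hnew : ∃ i, i ∉ Tpt a b w ∧ i ∈ Tpt a b (w + t₀ • u) := by
      by_contra hcon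
      push_neg at hcon
      have hTeq : Tpt a b (w + t₀ • u) = Tpt a b w := by
        apply Finset.Subset.antisymm _ hTsub'
        intro i hi
        by_contra hi'
        exact (hcon i hi') hi
      obtain ⟨δ, hδ, hmv⟩ := move hmem hw'P u
        (by rw [hTeq]; intro i hi; rw [hu0 i hi])
      have hmem2 := (hmv δ (le_of_lt hδ) (le_refl δ)).1
      have : t₀ + δ ∈ T := by
        constructor
        · linarith [htstar.1]
        · have : w + (t₀ + δ) • u = (w + t₀ • u) + δ • u := by
            rw [add_smul]; abel
          rw [this]
          exact hmem2
      have := le_csSup hTbdd this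
      linarith
    obtain ⟨i₀, hi₀n, hi₀y⟩ := hnew
    have hcardlt : (Tpt a b w).card < (Tpt a b (w + t₀ • u)).card := by
      apply Finset.card_lt_card
      exact Finset.ssubset_iff_of_subset hTsub' |>.2 ⟨i₀, hi₀y, hi₀n⟩
    have hmemS : (Tpt a b (w + t₀ • u)).card ∈ S := ⟨_, hw'f', rfl⟩
    have := le_csSup hSbdd hmemS
    omega
  have hvert : IsVertex P w := by
    have hne' : (FF a b P (Tpt a b w)).Nonempty := by
      rw [hFF]; exact Set.singleton_nonempty w
    have := FF_isFace hmem hne'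
    rwa [hFF] at this
  exact ⟨w, hwf, hvert, fun x hx => hwf'.2 x hx⟩

omit hmem in
/-- Dual direction vectors at a simple vertex. -/
lemma exists_z {w : Fin D → ℝ} (hD : 0 < D)
    (hcard : (Tpt a b w).card = D)
    (hli : LinearIndependent ℝ (fun i : {i // i ∈ Tpt a b w} => a i)) :
    ∃ z : Fin n → (Fin D → ℝ),
      (∀ j ∈ Tpt a b w, ∀ i ∈ Tpt a b w,
        lin (a j) (z i) = if j = i then -1 else 0) ∧
      (∀ u : Fin D → ℝ, u = ∑ i ∈ Tpt a b w, (-(lin (a i) u)) • z i) ∧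
      LinearIndependent ℝ (fun i : {i // i ∈ Tpt a b w} => z i) := by
  classical
  set Tw := Tpt a b w with hTw
  have hcardι : Fintype.card {i // i ∈ Tw} = D := by
    rw [Fintype.card_coe]; exact hcard
  have hne : Nonempty {i // i ∈ Tw} := by
    rw [← Fintype.card_pos_iff, hcardι]; exact hD
  have hfinrank : Module.finrank ℝ (Fin D → ℝ) = D := by
    rw [Module.finrank_pi]; simp
  set M : (Fin D → ℝ) →ₗ[ℝ] ({i // i ∈ Tw} → ℝ) :=
    LinearMap.pi (fun i => lin (a i.1)) with hM
  have hMapp : ∀ u (i : {i // i ∈ Tw}), M u i = lin (a i.1) u := fun u i => rfl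
  have hspan : Submodule.span ℝ (Set.range (fun i : {i // i ∈ Tw} => a i.1)) = ⊤ := by
    apply hli.span_eq_top_of_card_eq_finrank
    rw [hcardι, hfinrank]
  have hker : ∀ u, M u = 0 → u = 0 := by
    intro u hu
    have hG : lin u = (0 : (Fin D → ℝ) →ₗ[ℝ] ℝ) := by
      apply LinearMap.ext_on hspan
      rintro v ⟨i, rfl⟩
      rw [lin_comm]
      have := congrFun hu i
      rw [hMapp] at this
      simpa using this
    funext k
    have h1 : lin u (Pi.single k (1:ℝ)) = u k := by
      simp [lin_apply, Pi.single_apply, mul_ite]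
    rw [hG] at h1
    simpa using h1.symm
  have hMinj : Function.Injective M := by
    intro u v huv
    have h0 : u - v = 0 := hker _ (by rw [map_sub, huv, sub_self])
    exact sub_eq_zero.1 h0
  have hMsurj : Function.Surjective M := by
    rw [← LinearMap.injective_iff_surjective_of_finrank_eq_finrank (by rw [hfinrank, Module.finrank_pi, hcardι])]
    exact hMinj
  set z0 : {i // i ∈ Tw} → (Fin D → ℝ) :=
    fun i => Function.surjInv hMsurj (-(Pi.single i 1)) with hz0
  have hz0M : ∀ i, M (z0 i) = -(Pi.single i 1) := fun i => Function.surjInv_eq hMsurj _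
  set z : Fin n → (Fin D → ℝ) := fun i => if h : i ∈ Tw then z0 ⟨i, h⟩ else 0 with hz
  have hzz : ∀ (i) (h : i ∈ Tw), z i = z0 ⟨i, h⟩ := by
    intro i h; rw [hz]; simp [h]
  have hprop : ∀ j ∈ Tw, ∀ i ∈ Tw, lin (a j) (z i) = if j = i then -1 else 0 := by
    intro j hj i hi
    rw [hzz i hi]
    have h1 : lin (a j) (z0 ⟨i, hi⟩) = M (z0 ⟨i, hi⟩) ⟨j, hj⟩ := rfl
    rw [h1, hz0M]
    simp only [Pi.neg_apply, Pi.single_apply]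
    by_cases hij : j = i
    · subst hij; simp
    · have : (⟨j, hj⟩ : {i // i ∈ Tw}) ≠ ⟨i, hi⟩ := by simpa [Subtype.mk_eq_mk] using hij
      simp [this, hij]
  refine ⟨z, hprop, ?_, ?_⟩
  · intro u
    apply hMinj
    funext j
    rw [map_sum, Finset.sum_apply, hMapp]
    have hstep : ∀ i ∈ Tw, lin (a j.1) ((-(lin (a i) u)) • z i)
        = (if j.1 = i then lin (a i) u else 0) := by
      intro i hi
      rw [map_smul]
      rw [hprop j.1 j.2 i hi]
      by_cases hij : j.1 = i
      · simp [hij]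
      · simp [hij]
    calc lin (a j.1) u = ∑ i ∈ Tw, (if j.1 = i then lin (a i) u else 0) := by
          rw [Finset.sum_ite_eq Tw j.1 (fun i => lin (a i) u)]
          simp [j.2]
    _ = ∑ i ∈ Tw, M ((-(lin (a i) u)) • z i) j :=
          Finset.sum_congr rfl (fun i hi => by rw [hMapp]; exact (hstep i hi).symm)
  · have hsingle : LinearIndependent ℝ (fun i : {i // i ∈ Tw} => Pi.single i (1:ℝ)) := by
      have h := (Pi.basisFun ℝ {i // i ∈ Tw}).linearIndependent
      have he : ⇑(Pi.basisFun ℝ {i // i ∈ Tw}) = fun i : {i // i ∈ Tw} => Pi.single i (1:ℝ) := by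
        funext i
        exact Pi.basisFun_apply ℝ _ i
      rwa [he] at h
    have hneg : LinearIndependent ℝ (fun i : {i // i ∈ Tw} => -(Pi.single i (1:ℝ))) := by
      have := hsingle.units_smul (fun _ => -1)
      convert this using 1
      funext i
      simp [Units.smul_def]
    apply LinearIndependent.of_comp M
    have : (⇑M ∘ fun i : {i // i ∈ Tw} => z i) = fun i : {i // i ∈ Tw} => -(Pi.single i (1:ℝ)) := by
      funext i
      simp only [Function.comp_apply]
      rw [hzz i.1 i.2]
      have : (⟨i.1, i.2⟩ : {i // i ∈ Tw}) = i := rfl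
      rw [this, hz0M]
    rw [this]
    exact hneg

omit hmem in
lemma FF_closed (hcl : IsClosed P) (S : Finset (Fin n)) : IsClosed (FF a b P S) := by
  have : FF a b P S = P ∩ ⋂ i ∈ (S : Set (Fin n)), (lin (a i)) ⁻¹' {b i} := by
    ext x
    simp [mem_FF, Set.mem_iInter]
  rw [this]
  exact hcl.inter (isClosed_biInter fun i _ => IsClosed.preimage (lin_cont _) isClosed_singleton)

/-- points of an edge lie on the ray spanned by the dual direction -/
lemma edge_ray {w : Fin D → ℝ} {z : Fin n → (Fin D → ℝ)}
    (hzdec : ∀ u : Fin D → ℝ, u = ∑ i ∈ Tpt a b w, (-(lin (a i) u)) • z i)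
    {i : Fin n} (hi : i ∈ Tpt a b w) {x : Fin D → ℝ}
    (hx : x ∈ FF a b P ((Tpt a b w).erase i)) :
    ∃ t ≥ (0:ℝ), (x = w + t • z i ∧ lin (a i) x = b i - t) := by
  classical
  set u : Fin D → ℝ := x - w with hu
  have hlam : ∀ j ∈ Tpt a b w, -(lin (a j) u) = b j - lin (a j) x := by
    intro j hj
    rw [hu, map_sub, mem_Tpt.1 hj]
    ring
  have hzero : ∀ j ∈ Tpt a b w, j ≠ i → -(lin (a j) u) = 0 := by
    intro j hj hne
    rw [hlam j hj, hx.2 j (Finset.mem_erase.2 ⟨hne, hj⟩), sub_self]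
  have hcollapse : u = (-(lin (a i) u)) • z i := by
    have h1 := hzdec u
    rw [Finset.sum_eq_single_of_mem i hi (fun j hj hne => by rw [hzero j hj hne, zero_smul])] at h1
    exact h1
  refine ⟨-(lin (a i) u), ?_, ?_, ?_⟩
  · rw [hlam i hi]
    have := (hmem x).1 hx.1 i
    linarith
  · have : x = w + u := by rw [hu]; abel
    rw [this, ← hcollapse]
  · rw [hlam i hi]
    ring

/-- a short initial segment of each edge direction is contained in the edge -/
lemma edge_seg {w : Fin D → ℝ} (hwP : w ∈ P) {z : Fin n → (Fin D → ℝ)}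
    (hzprop : ∀ j ∈ Tpt a b w, ∀ i ∈ Tpt a b w,
      lin (a j) (z i) = if j = i then -1 else 0)
    {i : Fin n} (hi : i ∈ Tpt a b w) :
    ∃ δ > 0, ∀ t : ℝ, 0 ≤ t → t ≤ δ → w + t • z i ∈ FF a b P ((Tpt a b w).erase i) := by
  obtain ⟨δ, hδ, hmv⟩ := move hmem hwP (z i) (by
    intro j hj
    rw [hzprop j hj i hi]
    by_cases h : j = i <;> simp [h])
  refine ⟨δ, hδ, fun t ht0 htδ => ?_⟩
  refine ⟨(hmv t ht0 htδ).1, fun j hj => ?_⟩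
  obtain ⟨hjne, hjT⟩ := Finset.mem_erase.1 hj
  rw [map_add, map_smul, mem_Tpt.1 hjT, hzprop j hjT i hi]
  simp [hjne]

/-- at a vertex strictly below the sweep, no edge direction is level for `l` -/
lemma lz_ne {l : (Fin D → ℝ) →ₗ[ℝ] ℝ} {B : ℝ}
    (hbdd : ∀ f, IsFace P f → (∀ x ∈ f, l x < B) → Bornology.IsBounded f)
    (hinj : ∀ u v, IsVertex P u → IsVertex P v → l u = l v → u = v)
    {w : Fin D → ℝ} (hvert : IsVertex P w) (hwP : w ∈ P) (hwB : l w < B)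
    {z : Fin n → (Fin D → ℝ)}
    (hzprop : ∀ j ∈ Tpt a b w, ∀ i ∈ Tpt a b w,
      lin (a j) (z i) = if j = i then -1 else 0)
    (hzdec : ∀ u : Fin D → ℝ, u = ∑ i ∈ Tpt a b w, (-(lin (a i) u)) • z i)
    {i : Fin n} (hi : i ∈ Tpt a b w) : l (z i) ≠ 0 := by
  intro h0
  set e := FF a b P ((Tpt a b w).erase i) with he
  have hwe : w ∈ e := ⟨hwP, fun j hj => mem_Tpt.1 (Finset.mem_erase.1 hj).2⟩
  have hface : IsFace P e := FF_isFace hmem ⟨w, hwe⟩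
  have hbelow : ∀ x ∈ e, l x < B := by
    intro x hx
    obtain ⟨t, ht0, hxeq, -⟩ := edge_ray hmem hzdec hi hx
    rw [hxeq, map_add, map_smul, h0]
    simpa using hwB
  have hbd := hbdd e hface hbelow
  have hcl := FF_closed (a := a) (b := b) (Pclosed hmem) ((Tpt a b w).erase i)
  obtain ⟨v', hv'e, hv'vert, hv'max⟩ :=
    compact_face_vertex hmem (Pconvex hmem) hface ⟨w, hwe⟩ hcl hbd (-(lin (a i)))
  obtain ⟨δ, hδ, hseg⟩ := edge_seg hmem hwP hzprop hi
  have hδe := hseg δ (le_of_lt hδ) (le_refl δ)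
  have hmax := hv'max _ hδe
  obtain ⟨t', ht'0, hv'eq, hv'val⟩ := edge_ray hmem hzdec hi hv'e
  have hαδ : lin (a i) (w + δ • z i) = b i - δ := by
    rw [map_add, map_smul, mem_Tpt.1 hi, hzprop i hi i hi]
    simp
    ring
  have ht' : δ ≤ t' := by
    simp only [LinearMap.neg_apply] at hmax
    rw [hαδ, hv'val] at hmax
    linarith
  have hzne : z i ≠ 0 := by
    intro hz0
    have h := hzprop i hi i hi
    rw [hz0] at h
    simp at h
  have hne : v' ≠ w := by
    intro heq
    rw [heq] at hv'eq
    have h1 : t' • z i = 0 := by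
      have := hv'eq.symm
      have h2 : w + t' • z i - w = 0 := by rw [← hv'eq]; abel
      calc t' • z i = w + t' • z i - w := by abel
      _ = 0 := h2
    rcases smul_eq_zero.1 h1 with h | h
    · rw [h] at ht'; linarith
    · exact hzne h
  have hlv : l v' = l w := by
    rw [hv'eq, map_add, map_smul, h0]
    simp
  exact hne (hinj v' w hv'vert hvert hlv)

/-- the number of decreasing edge directions at a vertex below the sweep is at most `d` -/
lemma dec_le_d {l : (Fin D → ℝ) →ₗ[ℝ] ℝ} {B : ℝ} {d : ℕ}
    (hdim_le : ∀ f, IsFace P f → (∀ x ∈ f, l x < B) → faceDim f ≤ (d : ℤ))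
    {w : Fin D → ℝ} (hwP : w ∈ P) (hwB : l w < B)
    {z : Fin n → (Fin D → ℝ)}
    (hzprop : ∀ j ∈ Tpt a b w, ∀ i ∈ Tpt a b w,
      lin (a j) (z i) = if j = i then -1 else 0)
    (hzdec : ∀ u : Fin D → ℝ, u = ∑ i ∈ Tpt a b w, (-(lin (a i) u)) • z i)
    (hzli : LinearIndependent ℝ (fun i : {i // i ∈ Tpt a b w} => z i)) :
    ((Tpt a b w).filter (fun i => l (z i) < 0)).card ≤ d := by
  classical
  set Tw := Tpt a b w with hTw
  set Dec := Tw.filter (fun i => l (z i) < 0) with hDec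
  have hDecTw : Dec ⊆ Tw := Finset.filter_subset _ _
  set gw := FF a b P (Tw \ Dec) with hgw
  have hwgw : w ∈ gw := ⟨hwP, fun j hj => mem_Tpt.1 (Finset.mem_sdiff.1 hj).1⟩
  have hface : IsFace P gw := FF_isFace hmem ⟨w, hwgw⟩
  have hlam : ∀ x ∈ P, ∀ j ∈ Tw, (0:ℝ) ≤ -(lin (a j) (x - w)) := by
    intro x hx j hj
    rw [map_sub, mem_Tpt.1 hj]
    have := (hmem x).1 hx j
    linarith
  have hlx : ∀ x : Fin D → ℝ, l x = l w + ∑ j ∈ Tw, (-(lin (a j) (x - w))) * l (z j) := by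
    intro x
    have hdecu := hzdec (x - w)
    have : l (x - w) = ∑ j ∈ Tw, (-(lin (a j) (x - w))) * l (z j) := by
      conv_lhs => rw [hdecu]
      rw [map_sum]
      exact Finset.sum_congr rfl fun j _ => by rw [map_smul]; simp
    have h2 : l x = l w + l (x - w) := by rw [← map_add]; congr 1; abel
    rw [h2, this]
  have hbelow : ∀ x ∈ gw, l x < B := by
    intro x hx
    have hsum : ∑ j ∈ Tw, (-(lin (a j) (x - w))) * l (z j) ≤ 0 := by
      apply Finset.sum_nonpos
      intro j hj
      by_cases hjD : j ∈ Dec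
      · have h1 := hlam x hx.1 j hj
        have h2 : l (z j) < 0 := (Finset.mem_filter.1 hjD).2
        exact mul_nonpos_of_nonneg_of_nonpos h1 (le_of_lt h2)
      · have : lin (a j) x = b j := hx.2 j (Finset.mem_sdiff.2 ⟨hj, hjD⟩)
        rw [map_sub, this, mem_Tpt.1 hj]
        simp
    rw [hlx x]
    linarith
  have hdim := hdim_le gw hface hbelow
  -- lower bound for the dimension
  set u₀ : Fin D → ℝ := ∑ i ∈ Dec, z i with hu₀
  have hα : ∀ j ∈ Tw, lin (a j) u₀ = if j ∈ Dec then -1 else 0 := by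
    intro j hj
    rw [hu₀, map_sum]
    have : ∀ i ∈ Dec, lin (a j) (z i) = if j = i then -1 else 0 :=
      fun i hi => hzprop j hj i (hDecTw hi)
    rw [Finset.sum_congr rfl this, Finset.sum_ite_eq Dec j (fun _ => (-1:ℝ))]
  obtain ⟨δ, hδ, hmv⟩ := move hmem hwP u₀ (by
    intro j hj
    rw [hα j hj]
    by_cases h : j ∈ Dec <;> simp [h])
  obtain ⟨hx₁P, hx₁slack⟩ := hmv δ (le_of_lt hδ) (le_refl δ)
  set x₁ := w + δ • u₀ with hx₁
  have hx₁gw : x₁ ∈ gw := by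
    refine ⟨hx₁P, fun j hj => ?_⟩
    obtain ⟨hjT, hjD⟩ := Finset.mem_sdiff.1 hj
    rw [hx₁, map_add, map_smul, mem_Tpt.1 hjT, hα j hjT]
    simp [hjD]
  have hzmem : ∀ j0 ∈ Dec, z j0 ∈ (affineSpan ℝ gw).direction := by
    intro j0 hj0
    obtain ⟨ε₂, hε₂, hpert⟩ := perturb (a := a) (b := b) x₁ (z j0)
      (Finset.univ.filter (fun j => j ∉ Tw))
      (by intro j hj
          simp only [Finset.mem_filter, Finset.mem_univ, true_and] at hj
          exact hx₁slack j hj)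
    set s := min (δ/2) ε₂ with hs
    have hs0 : 0 < s := lt_min (by linarith) hε₂
    have hx₂gw : x₁ + s • z j0 ∈ gw := by
      constructor
      · apply (hmem _).2
        intro j
        by_cases hjT : j ∈ Tw
        · have hval : lin (a j) (x₁ + s • z j0)
              = b j + δ * (if j ∈ Dec then -1 else 0) + s * (if j = j0 then -1 else 0) := by
            rw [map_add, map_smul, hx₁, map_add, map_smul, mem_Tpt.1 hjT, hα j hjT,
              hzprop j hjT j0 (hDecTw hj0)]
            try simp only [smul_eq_mul]
            try ring
          rw [hval]
          have hd1 : (if j ∈ Dec then (-1:ℝ) else 0) ≤ 0 := by split_ifs <;> norm_num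
          have hd2 : (if j = j0 then (-1:ℝ) else 0) ≤ 0 := by split_ifs <;> norm_num
          have hm1 : δ * (if j ∈ Dec then (-1:ℝ) else 0) ≤ 0 :=
            mul_nonpos_of_nonneg_of_nonpos (le_of_lt hδ) hd1
          have hm2 : s * (if j = j0 then (-1:ℝ) else 0) ≤ 0 :=
            mul_nonpos_of_nonneg_of_nonpos (le_of_lt hs0) hd2
          linarith
        · have := hpert s (by rw [abs_of_pos hs0]; exact min_le_right _ _) j (by simp [hjT])
          exact le_of_lt this
      · intro j hj
        obtain ⟨hjT, hjD⟩ := Finset.mem_sdiff.1 hj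
        have hjj0 : j ≠ j0 := fun h => hjD (h ▸ hj0)
        rw [map_add, map_smul, hzprop j hjT j0 (hDecTw hj0)]
        have : lin (a j) x₁ = b j := hx₁gw.2 j hj
        rw [this]
        simp [hjj0]
    have hvsub : s • z j0 ∈ (affineSpan ℝ gw).direction := by
      have h1 := subset_affineSpan ℝ gw hx₂gw
      have h2 := subset_affineSpan ℝ gw hx₁gw
      have := AffineSubspace.vsub_mem_direction h1 h2
      simpa using this
    have := Submodule.smul_mem _ s⁻¹ hvsub
    rwa [smul_smul, inv_mul_cancel₀ (ne_of_gt hs0), one_smul] at this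
  -- rank bound
  have hDecli : LinearIndependent ℝ (fun j : {j // j ∈ Dec} => z j.1) := by
    have he : Function.Injective (fun j : {j // j ∈ Dec} => (⟨j.1, hDecTw j.2⟩ : {i // i ∈ Tw})) := by
      intro x y hxy
      apply Subtype.ext
      have := congrArg Subtype.val hxy; exact this
    exact hzli.comp _ he
  have hspanle : Submodule.span ℝ (Set.range (fun j : {j // j ∈ Dec} => z j.1))
      ≤ (affineSpan ℝ gw).direction := by
    rw [Submodule.span_le]
    rintro v ⟨j, rfl⟩
    exact hzmem j.1 j.2
  have hrank : Module.finrank ℝ (Submodule.span ℝ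
      (Set.range (fun j : {j // j ∈ Dec} => z j.1))) = Dec.card := by
    rw [finrank_span_eq_card hDecli, Fintype.card_coe]
  have hmono := Submodule.finrank_mono hspanle
  rw [hrank] at hmono
  have hfd : faceDim gw = (Module.finrank ℝ (affineSpan ℝ gw).direction : ℤ) := by
    rw [faceDim, if_neg]
    exact Set.nonempty_iff_ne_empty.1 ⟨w, hwgw⟩
  rw [hfd] at hdim
  have : (Dec.card : ℤ) ≤ (d : ℤ) := le_trans (by exact_mod_cast hmono) hdim
  exact_mod_cast this

/-- strict minimality of the vertex on the face `FF A` for `Dec ⊆ A ⊆ Tw` -/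
lemma min_strict {l : (Fin D → ℝ) →ₗ[ℝ] ℝ}
    {w : Fin D → ℝ}
    {z : Fin n → (Fin D → ℝ)}
    (hzdec : ∀ u : Fin D → ℝ, u = ∑ i ∈ Tpt a b w, (-(lin (a i) u)) • z i)
    (hlz : ∀ i ∈ Tpt a b w, l (z i) ≠ 0)
    {A : Finset (Fin n)}
    (hDecA : (Tpt a b w).filter (fun i => l (z i) < 0) ⊆ A) (hATw : A ⊆ Tpt a b w)
    {x : Fin D → ℝ} (hx : x ∈ FF a b P A) (hxw : x ≠ w) : l w < l x := by
  classical
  set Tw := Tpt a b w with hTw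
  set lam : Fin n → ℝ := fun j => -(lin (a j) (x - w)) with hlamdef
  have hlam0 : ∀ j ∈ Tw, 0 ≤ lam j := by
    intro j hj
    rw [hlamdef]
    simp only []
    rw [map_sub, mem_Tpt.1 hj]
    have := (hmem x).1 hx.1 j
    linarith
  have hlamA : ∀ j ∈ A, lam j = 0 := by
    intro j hj
    rw [hlamdef]
    simp only []
    rw [map_sub, mem_Tpt.1 (hATw hj), hx.2 j hj]
    ring
  have hlu : l (x - w) = ∑ j ∈ Tw, lam j * l (z j) := by
    conv_lhs => rw [hzdec (x - w)]
    rw [map_sum]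
    exact Finset.sum_congr rfl fun j _ => by rw [map_smul]; simp [hlamdef]
  have hterms : ∀ j ∈ Tw, 0 ≤ lam j * l (z j) := by
    intro j hj
    by_cases hjA : j ∈ A
    · rw [hlamA j hjA]; simp
    · have hjnD : ¬ (l (z j) < 0) := fun hc => hjA (hDecA (Finset.mem_filter.2 ⟨hj, hc⟩))
      have : 0 < l (z j) := lt_of_le_of_ne (not_lt.1 hjnD) (Ne.symm (hlz j hj))
      exact mul_nonneg (hlam0 j hj) (le_of_lt this)
  have hex : ∃ j ∈ Tw, 0 < lam j * l (z j) := by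
    by_contra hcon
    push_neg at hcon
    have hall : ∀ j ∈ Tw, lam j = 0 := by
      intro j hj
      by_contra hne
      have hjA : j ∉ A := fun hc => hne (hlamA j hc)
      have h1 : 0 < lam j := lt_of_le_of_ne (hlam0 j hj) (Ne.symm hne)
      have hjnD : ¬ (l (z j) < 0) := fun hc => hjA (hDecA (Finset.mem_filter.2 ⟨hj, hc⟩))
      have h2 : 0 < l (z j) := lt_of_le_of_ne (not_lt.1 hjnD) (Ne.symm (hlz j hj))
      exact absurd (mul_pos h1 h2) (not_lt.2 (hcon j hj))
    have : x - w = 0 := by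
      rw [hzdec (x - w)]
      apply Finset.sum_eq_zero
      intro j hj
      have h0 : (-(lin (a j)) (x - w)) = lam j := rfl
      rw [h0, hall j hj, zero_smul]
    exact hxw (by rwa [sub_eq_zero] at this)
  have hpos : 0 < ∑ j ∈ Tw, lam j * l (z j) := Finset.sum_pos' hterms hex
  have : l x = l w + l (x - w) := by rw [← map_add]; congr 1; abel
  rw [this, hlu]
  linarith

end main

end

end GPF

theorem general_pos_total_faces (D n : ℕ)
    (a : Fin n → Fin D → ℝ) (b : Fin n → ℝ) (ha : ∀ i, a i ≠ 0)
    (P : Set (Fin D → ℝ)) (hP : P = ⋂ i, {x | ∑ j, a i j * x j ≤ b i})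
    (hfull : affineSpan ℝ P = ⊤)
    (hpointed : ∃ v, IsVertex P v)
    (hgenpos : ∀ v, IsVertex P v →
      {i : Fin n | ∑ j, a i j * v j = b i}.ncard = D ∧
      LinearIndependent ℝ (fun i : {i : Fin n // ∑ j, a i j * v j = b i} => a i))
    (l : (Fin D → ℝ) →ₗ[ℝ] ℝ)
    (hinj : ∀ u v, IsVertex P u → IsVertex P v → l u = l v → u = v)
    (B : ℝ)
    (hminB : ∃ m ∈ P, (∀ x ∈ P, l m ≤ l x) ∧ l m < B)
    (hbdd : ∀ f, IsFace P f → (∀ x ∈ f, l x < B) → Bornology.IsBounded f)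
    (d : ℕ) (hdD : d < D)
    (hdim_le : ∀ f, IsFace P f → (∀ x ∈ f, l x < B) → faceDim f ≤ (d : ℤ))
    (hdim_ex : ∃ f, IsFace P f ∧ (∀ x ∈ f, l x < B) ∧ faceDim f = (d : ℤ)) :
    {f : Set (Fin D → ℝ) | IsFace P f ∧ f.Nonempty ∧ ∀ x ∈ f, l x < B}.Finite ∧
      {f : Set (Fin D → ℝ) | IsFace P f ∧ f.Nonempty ∧ ∀ x ∈ f, l x < B}.ncard ≤
        2 ^ d * n.choose d := by
  classical
  have hmem := GPF.memP_of_hP hP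
  have hD : 0 < D := lt_of_le_of_lt (Nat.zero_le d) hdD
  set Faces : Set (Set (Fin D → ℝ)) :=
    {f : Set (Fin D → ℝ) | IsFace P f ∧ f.Nonempty ∧ ∀ x ∈ f, l x < B} with hFaces
  -- key data for each face
  have key : ∀ f : Set (Fin D → ℝ), ∃ (w : Fin D → ℝ) (A : Finset (Fin n)),
      f ∈ Faces →
      (w ∈ P ∧ A.card = d ∧ A ⊆ GPF.Tpt a b w ∧
        GPF.TF a b f ⊆ GPF.Tpt a b w ∧
        GPF.Tpt a b w \ GPF.TF a b f ⊆ A ∧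
        (∀ x ∈ GPF.FF a b P A, x ≠ w → l w < l x)) := by
    intro f
    by_cases hf : f ∈ Faces
    swap
    · exact ⟨0, ∅, fun h => absurd h hf⟩
    obtain ⟨hface, hne, hblw⟩ := hf
    have hcl := GPF.face_closed (GPF.Pclosed hmem) hface
    have hbd := hbdd f hface hblw
    obtain ⟨w, hwf, hvert, hmax⟩ :=
      GPF.compact_face_vertex hmem (GPF.Pconvex hmem) hface hne hcl hbd l
    have hwP : w ∈ P := GPF.face_subset hface hwf
    have hwB : l w < B := hblw w hwf
    -- transport general position data
    obtain ⟨hgp1, hgp2⟩ := hgenpos w hvert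
    have hseteq : {i : Fin n | ∑ j, a i j * w j = b i} = ↑(GPF.Tpt a b w) := by
      ext i
      simp [GPF.mem_Tpt, GPF.lin_apply]
    rw [hseteq, Set.ncard_coe_finset] at hgp1
    have hli : LinearIndependent ℝ (fun i : {i // i ∈ GPF.Tpt a b w} => a i.1) := by
      have hpq : ∀ i : Fin n, i ∈ GPF.Tpt a b w ↔ ∑ j, a i j * w j = b i := by
        intro i; simp [GPF.mem_Tpt, GPF.lin_apply]
      have h2 := hgp2.comp (Equiv.subtypeEquivRight hpq)
        (Equiv.subtypeEquivRight hpq).injective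
      have h3 : ((fun i : {i : Fin n // ∑ j, a i j * w j = b i} => a i.1)
            ∘ (Equiv.subtypeEquivRight hpq))
          = fun i : {i // i ∈ GPF.Tpt a b w} => a i.1 := by
        funext i
        rfl
      rwa [h3] at h2
    obtain ⟨z, hzprop, hzdec, hzli⟩ := GPF.exists_z hD hgp1 hli
    have hlz : ∀ i ∈ GPF.Tpt a b w, l (z i) ≠ 0 :=
      fun i hi => GPF.lz_ne hmem hbdd hinj hvert hwP hwB hzprop hzdec hi
    have hdec : ((GPF.Tpt a b w).filter (fun i => l (z i) < 0)).card ≤ d :=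
      GPF.dec_le_d hmem hdim_le hwP hwB hzprop hzdec hzli
    set Dec := (GPF.Tpt a b w).filter (fun i => l (z i) < 0) with hDecDef
    have hDecTw : Dec ⊆ GPF.Tpt a b w := Finset.filter_subset _ _
    obtain ⟨A, hDecA, hATw, hAcard⟩ := Finset.exists_subsuperset_card_eq
      (n := d - Dec.card + Dec.card) hDecTw (Nat.le_add_left _ _)
      (by
        have : d - Dec.card + Dec.card = d := Nat.sub_add_cancel hdec
        rw [this, hgp1]
        exact le_of_lt hdD)
    have hAcard' : A.card = d := by
      rw [hAcard, Nat.sub_add_cancel hdec]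
    have hTFsub : GPF.TF a b f ⊆ GPF.Tpt a b w := GPF.TF_subset_Tpt hwf
    refine ⟨w, A, fun _ => ⟨hwP, hAcard', hATw, hTFsub, ?_, ?_⟩⟩
    · -- Tpt \ TF ⊆ A
      intro i hi
      obtain ⟨hiT, hiTF⟩ := Finset.mem_sdiff.1 hi
      apply hDecA
      rw [hDecDef]
      refine Finset.mem_filter.2 ⟨hiT, ?_⟩
      -- the edge is inside f and increasing would contradict maximality
      have hTFsub' : GPF.TF a b f ⊆ (GPF.Tpt a b w).erase i :=
        Finset.subset_erase.2 ⟨hTFsub, hiTF⟩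
      have hesub : GPF.FF a b P ((GPF.Tpt a b w).erase i) ⊆ f := by
        rw [GPF.face_eq_FF hmem (GPF.Pconvex hmem) hface hne]
        exact GPF.FF_mono hTFsub'
      obtain ⟨δ, hδ, hseg⟩ := GPF.edge_seg hmem hwP hzprop hiT
      have hpt : w + δ • z i ∈ f := hesub (hseg δ (le_of_lt hδ) (le_refl δ))
      have hle := hmax _ hpt
      rw [map_add, map_smul] at hle
      simp only [smul_eq_mul] at hle
      have hzile : l (z i) ≤ 0 := by nlinarith
      exact lt_of_le_of_ne hzile (hlz i hiT)
    · intro x hx hne'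
      exact GPF.min_strict hmem hzdec hlz hDecA hATw hx hne'
  choose wof Aof hkey using key
  -- the injection
  set TGT : Finset (Finset (Fin n) × Finset (Fin n)) :=
    (Finset.univ.powersetCard d).biUnion
      (fun A => A.powerset.image (fun S => (A, S))) with hTGT
  set Φ : Set (Fin D → ℝ) → Finset (Fin n) × Finset (Fin n) :=
    fun f => (Aof f, GPF.Tpt a b (wof f) \ GPF.TF a b f) with hΦ
  have hmaps : ∀ f ∈ Faces, Φ f ∈ (↑TGT : Set (Finset (Fin n) × Finset (Fin n))) := by
    intro f hf
    obtain ⟨hwP, hAcard, hATw, hTFsub, hS'A, hmin⟩ := hkey f hf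
    simp only [hTGT, Finset.coe_biUnion, Set.mem_iUnion, Finset.mem_coe]
    refine ⟨Aof f, Finset.mem_powersetCard.2 ⟨Finset.subset_univ _, hAcard⟩, ?_⟩
    apply Finset.mem_image.2
    exact ⟨GPF.Tpt a b (wof f) \ GPF.TF a b f, Finset.mem_powerset.2 hS'A, rfl⟩
  have hinjOn : Set.InjOn Φ Faces := by
    intro f₁ hf₁ f₂ hf₂ heq
    obtain ⟨hwP₁, hAcard₁, hATw₁, hTFsub₁, hS'A₁, hmin₁⟩ := hkey f₁ hf₁
    obtain ⟨hwP₂, hAcard₂, hATw₂, hTFsub₂, hS'A₂, hmin₂⟩ := hkey f₂ hf₂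
    have hA : Aof f₁ = Aof f₂ := congrArg Prod.fst heq
    have hS : GPF.Tpt a b (wof f₁) \ GPF.TF a b f₁
        = GPF.Tpt a b (wof f₂) \ GPF.TF a b f₂ := congrArg Prod.snd heq
    -- the two vertices coincide
    have hw : wof f₁ = wof f₂ := by
      by_contra hne
      have h21 : wof f₂ ∈ GPF.FF a b P (Aof f₁) := by
        refine ⟨hwP₂, fun i hi => ?_⟩
        rw [hA] at hi
        exact GPF.mem_Tpt.1 (hATw₂ hi)
      have h12 : wof f₁ ∈ GPF.FF a b P (Aof f₂) := by
        refine ⟨hwP₁, fun i hi => ?_⟩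
        rw [← hA] at hi
        exact GPF.mem_Tpt.1 (hATw₁ hi)
      have hlt1 := hmin₁ _ h21 (fun h => hne h.symm)
      have hlt2 := hmin₂ _ h12 hne
      linarith
    have hTF : GPF.TF a b f₁ = GPF.TF a b f₂ := by
      have e₁ := Finset.sdiff_sdiff_eq_self hTFsub₁
      have e₂ := Finset.sdiff_sdiff_eq_self hTFsub₂
      rw [← e₁, ← e₂, hS, hw]
    have hface₁ := hf₁.1
    have hface₂ := hf₂.1
    rw [GPF.face_eq_FF hmem (GPF.Pconvex hmem) hface₁ hf₁.2.1,
      GPF.face_eq_FF hmem (GPF.Pconvex hmem) hface₂ hf₂.2.1, hTF]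
  -- cardinality of the target
  have hTGTcard : TGT.card = n.choose d * 2 ^ d := by
    have hdisj : ∀ A₁ ∈ (Finset.univ : Finset (Fin n)).powersetCard d,
        ∀ A₂ ∈ (Finset.univ : Finset (Fin n)).powersetCard d,
        A₁ ≠ A₂ → Disjoint (A₁.powerset.image (fun S => (A₁, S)))
          (A₂.powerset.image (fun S => (A₂, S))) := by
      intro A₁ h₁ A₂ h₂ hne
      rw [Finset.disjoint_left]
      intro p hp₁ hp₂
      obtain ⟨S₁, _, rfl⟩ := Finset.mem_image.1 hp₁
      obtain ⟨S₂, _, h⟩ := Finset.mem_image.1 hp₂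
      exact hne (by simpa using (congrArg Prod.fst h).symm)
    rw [hTGT, Finset.card_biUnion hdisj]
    have hstep : ∀ A ∈ (Finset.univ : Finset (Fin n)).powersetCard d,
        (A.powerset.image (fun S => (A, S))).card = 2 ^ d := by
      intro A hA
      rw [Finset.card_image_of_injective _ (fun S₁ S₂ h => by
        exact congrArg Prod.snd h)]
      rw [Finset.card_powerset, (Finset.mem_powersetCard.1 hA).2]
    rw [Finset.sum_congr rfl hstep, Finset.sum_const, smul_eq_mul]
    congr 1
    rw [Finset.card_powersetCard, Finset.card_univ, Fintype.card_fin]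
  have hfin : Faces.Finite := by
    apply Set.Finite.of_finite_image _ hinjOn
    exact Set.Finite.subset TGT.finite_toSet (Set.image_subset_iff.2 hmaps)
  constructor
  · exact hfin
  · calc Faces.ncard ≤ (↑TGT : Set (Finset (Fin n) × Finset (Fin n))).ncard :=
        Set.ncard_le_ncard_of_injOn Φ hmaps hinjOn TGT.finite_toSet
    _ = TGT.card := Set.ncard_coe_finset TGT
    _ = 2 ^ d * n.choose d := by rw [hTGTcard, Nat.mul_comm]
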